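/- Let f, g₁, g₂ : 𝔻 → 𝔻 be injective holomorphic maps with g₁(𝔻) ∩ g₂(𝔻) = ∅. If F_f is square-integrable on 𝔻 × 𝔻 and G_{g₁,g₂} is square-integrable on 𝔻 × 𝔻, then G_{f∘g₁, f∘g₂} is square-integrable on 𝔻 × 𝔻. -/

import Mathlib

open MeasureTheory Complex Set ENNReal

noncomputable section

/-- The open unit disk in ℂ. -/
def unitDisk : Set ℂ := {z : ℂ | ‖z‖ < 1}

/-- The normalized area measure `π⁻¹ · (2-dimensional Lebesgue measure)` on ℂ. -/
def μB : Measure ℂ := (ENNReal.ofReal (Real.pi)⁻¹) • (volume : Measure ℂ)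

lemma isOpen_unitDisk : IsOpen unitDisk :=
  isOpen_lt continuous_norm continuous_const

lemma measurableSet_unitDisk : MeasurableSet unitDisk :=
  isOpen_unitDisk.measurableSet

lemma μB_haar : μB.IsAddHaarMeasure := by
  unfold μB
  exact Measure.IsAddHaarMeasure.smul _
    (ne_of_gt (ENNReal.ofReal_pos.2 (by positivity))) ENNReal.ofReal_ne_top

instance : SFinite μB := by unfold μB; infer_instance

lemma det_cmul (c : ℂ) :
    ((ContinuousLinearMap.smulRight (1 : ℂ →L[ℂ] ℂ) c).restrictScalars ℝ).det
      = Complex.normSq c := by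
  have h : (((ContinuousLinearMap.smulRight (1 : ℂ →L[ℂ] ℂ) c).restrictScalars ℝ) : ℂ →ₗ[ℝ] ℂ)
      = Algebra.lmul ℝ ℂ c := by
    apply LinearMap.ext
    intro x
    simp [mul_comm]
  rw [ContinuousLinearMap.det, h, ← Algebra.norm_apply, Algebra.norm_complex_apply]

lemma cov (g : ℂ → ℂ) (hm : Set.MapsTo g unitDisk unitDisk)
    (hd : DifferentiableOn ℂ g unitDisk) (hi : Set.InjOn g unitDisk) (G : ℂ → ℝ≥0∞) :
    ∫⁻ x in unitDisk, ENNReal.ofReal (Complex.normSq (deriv g x)) * G (g x) ∂μB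
      ≤ ∫⁻ x in unitDisk, G x ∂μB := by
  haveI := μB_haar
  have h := lintegral_image_eq_lintegral_abs_det_fderiv_mul μB measurableSet_unitDisk
      (f' := fun x => (ContinuousLinearMap.smulRight (1 : ℂ →L[ℂ] ℂ) (deriv g x)).restrictScalars ℝ)
      (fun x hx => (((hd.differentiableAt
        (isOpen_unitDisk.mem_nhds hx)).hasDerivAt).hasFDerivAt.restrictScalars ℝ).hasFDerivWithinAt)
      hi G
  simp only [det_cmul, _root_.abs_of_nonneg (Complex.normSq_nonneg _)] at h
  rw [← h]
  exact lintegral_mono' (Measure.restrict_mono hm.image_subset le_rfl) le_rfl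

def Dfun (f g₁ g₂ : ℂ → ℂ) (p : ℂ × ℂ) : ℂ :=
  deriv g₁ p.1 * deriv g₂ p.2 *
    (deriv f (g₁ p.1) * deriv f (g₂ p.2) / (f (g₁ p.1) - f (g₂ p.2)) ^ 2
      - 1 / (g₁ p.1 - g₂ p.2) ^ 2)

/-- The cocycle `F_φ(z,w) = φ'(z)φ'(w)/(φ(z) − φ(w))² − 1/(z − w)²`. -/
def Fcocycle (φ : ℂ → ℂ) (z w : ℂ) : ℂ :=
  deriv φ z * deriv φ w / (φ z - φ w) ^ 2 - 1 / (z - w) ^ 2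

/-- The kernel `G_{φ₁,φ₂}(z,w) = φ₁'(z)φ₂'(w)/(φ₁(z) − φ₂(w))²`. -/
def Gkernel (φ₁ φ₂ : ℂ → ℂ) (z w : ℂ) : ℂ :=
  deriv φ₁ z * deriv φ₂ w / (φ₁ z - φ₂ w) ^ 2

/-- If `F_f` and `G_{g₁,g₂}` are square-integrable on `𝔻 × 𝔻`, where
`g₁(𝔻) ∩ g₂(𝔻) = ∅`, then `G_{f∘g₁, f∘g₂}` is square-integrable on `𝔻 × 𝔻`. -/
theorem statement_10 (f g₁ g₂ : ℂ → ℂ)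
    (hfm : Set.MapsTo f unitDisk unitDisk)
    (hfd : DifferentiableOn ℂ f unitDisk)
    (hfi : Set.InjOn f unitDisk)
    (hg₁m : Set.MapsTo g₁ unitDisk unitDisk)
    (hg₁d : DifferentiableOn ℂ g₁ unitDisk)
    (hg₁i : Set.InjOn g₁ unitDisk)
    (hg₂m : Set.MapsTo g₂ unitDisk unitDisk)
    (hg₂d : DifferentiableOn ℂ g₂ unitDisk)
    (hg₂i : Set.InjOn g₂ unitDisk)
    (hdisj : g₁ '' unitDisk ∩ g₂ '' unitDisk = ∅)
    (hFsq : IntegrableOn (fun p : ℂ × ℂ => ‖Fcocycle f p.1 p.2‖ ^ 2)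
      (unitDisk ×ˢ unitDisk) (μB.prod μB))
    (hGsq : IntegrableOn (fun p : ℂ × ℂ => ‖Gkernel g₁ g₂ p.1 p.2‖ ^ 2)
      (unitDisk ×ˢ unitDisk) (μB.prod μB)) :
    IntegrableOn (fun p : ℂ × ℂ => ‖Gkernel (f ∘ g₁) (f ∘ g₂) p.1 p.2‖ ^ 2)
      (unitDisk ×ˢ unitDisk) (μB.prod μB) := by
  have hSo : IsOpen unitDisk := isOpen_unitDisk
  have hSm : MeasurableSet (unitDisk ×ˢ unitDisk) :=
    measurableSet_unitDisk.prod measurableSet_unitDisk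
  -- basic pointwise facts
  have hne : ∀ z ∈ unitDisk, ∀ w ∈ unitDisk, g₁ z ≠ g₂ w := by
    intro z hz w hw h
    have : g₁ z ∈ g₁ '' unitDisk ∩ g₂ '' unitDisk :=
      ⟨Set.mem_image_of_mem _ hz, h ▸ Set.mem_image_of_mem _ hw⟩
    rw [hdisj] at this
    exact this
  have hfne : ∀ z ∈ unitDisk, ∀ w ∈ unitDisk, f (g₁ z) ≠ f (g₂ w) :=
    fun z hz w hw h => hne z hz w hw (hfi (hg₁m hz) (hg₂m hw) h)
  -- continuity facts
  have hc₁ : ContinuousOn g₁ unitDisk := hg₁d.continuousOn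
  have hc₂ : ContinuousOn g₂ unitDisk := hg₂d.continuousOn
  have hdc₁ : ContinuousOn (deriv g₁) unitDisk :=
    ((hg₁d.analyticOnNhd hSo).deriv).continuousOn
  have hdc₂ : ContinuousOn (deriv g₂) unitDisk :=
    ((hg₂d.analyticOnNhd hSo).deriv).continuousOn
  have hcf : ContinuousOn f unitDisk := hfd.continuousOn
  have hdcf : ContinuousOn (deriv f) unitDisk :=
    ((hfd.analyticOnNhd hSo).deriv).continuousOn
  have hm1 : Set.MapsTo (fun p : ℂ × ℂ => p.1) (unitDisk ×ˢ unitDisk) unitDisk :=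
    fun p hp => hp.1
  have hm2 : Set.MapsTo (fun p : ℂ × ℂ => p.2) (unitDisk ×ˢ unitDisk) unitDisk :=
    fun p hp => hp.2
  have hg₁p : ContinuousOn (fun p : ℂ × ℂ => g₁ p.1) (unitDisk ×ˢ unitDisk) :=
    hc₁.comp continuousOn_fst hm1
  have hg₂p : ContinuousOn (fun p : ℂ × ℂ => g₂ p.2) (unitDisk ×ˢ unitDisk) :=
    hc₂.comp continuousOn_snd hm2
  have hmg₁ : Set.MapsTo (fun p : ℂ × ℂ => g₁ p.1) (unitDisk ×ˢ unitDisk) unitDisk :=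
    fun p hp => hg₁m (hm1 hp)
  have hmg₂ : Set.MapsTo (fun p : ℂ × ℂ => g₂ p.2) (unitDisk ×ˢ unitDisk) unitDisk :=
    fun p hp => hg₂m (hm2 hp)
  have hA : ContinuousOn (fun p : ℂ × ℂ => deriv g₁ p.1 * deriv g₂ p.2)
      (unitDisk ×ˢ unitDisk) :=
    (hdc₁.comp continuousOn_fst hm1).mul (hdc₂.comp continuousOn_snd hm2)
  have hDcont : ContinuousOn (Dfun f g₁ g₂) (unitDisk ×ˢ unitDisk) := by
    apply hA.mul
    apply ContinuousOn.sub
    · apply ContinuousOn.div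
      · exact (hdcf.comp hg₁p hmg₁).mul (hdcf.comp hg₂p hmg₂)
      · exact ((hcf.comp hg₁p hmg₁).sub (hcf.comp hg₂p hmg₂)).pow 2
      · exact fun p hp => pow_ne_zero _ (sub_ne_zero.2 (hfne _ hp.1 _ hp.2))
    · apply ContinuousOn.div continuousOn_const
      · exact (hg₁p.sub hg₂p).pow 2
      · exact fun p hp => pow_ne_zero _ (sub_ne_zero.2 (hne _ hp.1 _ hp.2))
  have hKcont : ContinuousOn (fun p : ℂ × ℂ => Gkernel g₁ g₂ p.1 p.2)
      (unitDisk ×ˢ unitDisk) := by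
    apply hA.div ((hg₁p.sub hg₂p).pow 2)
    exact fun p hp => pow_ne_zero _ (sub_ne_zero.2 (hne _ hp.1 _ hp.2))
  -- the key identity
  have hid : ∀ p ∈ unitDisk ×ˢ unitDisk,
      Gkernel (f ∘ g₁) (f ∘ g₂) p.1 p.2 = Dfun f g₁ g₂ p + Gkernel g₁ g₂ p.1 p.2 := by
    rintro ⟨z, w⟩ ⟨hz, hw⟩
    have hz1 : DifferentiableAt ℂ g₁ z := hg₁d.differentiableAt (hSo.mem_nhds hz)
    have hw2 : DifferentiableAt ℂ g₂ w := hg₂d.differentiableAt (hSo.mem_nhds hw)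
    have hfz : DifferentiableAt ℂ f (g₁ z) := hfd.differentiableAt (hSo.mem_nhds (hg₁m hz))
    have hfw : DifferentiableAt ℂ f (g₂ w) := hfd.differentiableAt (hSo.mem_nhds (hg₂m hw))
    simp only [Gkernel, Dfun, Function.comp_apply, deriv_comp z hfz hz1, deriv_comp w hfw hw2]
    ring
  -- integrability of ‖Dfun‖²
  have hDint : IntegrableOn (fun p : ℂ × ℂ => ‖Dfun f g₁ g₂ p‖ ^ 2)
      (unitDisk ×ˢ unitDisk) (μB.prod μB) := by
    refine ⟨((hDcont.norm.pow 2).aestronglyMeasurable hSm), ?_⟩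
    rw [hasFiniteIntegral_iff_ofReal (Filter.Eventually.of_forall fun p => sq_nonneg _)]
    set H : ℂ → ℂ → ℝ≥0∞ := fun a b => ENNReal.ofReal (‖Fcocycle f a b‖ ^ 2) with hH
    have haem : AEMeasurable (fun p : ℂ × ℂ => ENNReal.ofReal (‖Dfun f g₁ g₂ p‖ ^ 2))
        ((μB.restrict unitDisk).prod (μB.restrict unitDisk)) := by
      rw [Measure.prod_restrict]
      exact ((hDcont.norm.pow 2).aestronglyMeasurable hSm).aemeasurable.ennreal_ofReal
    have haemH : AEMeasurable (fun p : ℂ × ℂ => H p.1 p.2)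
        ((μB.restrict unitDisk).prod (μB.restrict unitDisk)) := by
      rw [Measure.prod_restrict]
      exact hFsq.1.aemeasurable.ennreal_ofReal
    have hsplit : ∀ z w : ℂ, ENNReal.ofReal (‖Dfun f g₁ g₂ (z, w)‖ ^ 2)
        = ENNReal.ofReal (Complex.normSq (deriv g₁ z)) *
          (ENNReal.ofReal (Complex.normSq (deriv g₂ w)) * H (g₁ z) (g₂ w)) := by
      intro z w
      have h1 : ‖Dfun f g₁ g₂ (z, w)‖ ^ 2
          = Complex.normSq (deriv g₁ z) * (Complex.normSq (deriv g₂ w) *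
            ‖Fcocycle f (g₁ z) (g₂ w)‖ ^ 2) := by
        simp only [Dfun, Fcocycle, norm_mul, mul_pow, ← Complex.sq_norm]
        ring
      rw [h1, ENNReal.ofReal_mul (Complex.normSq_nonneg _),
        ENNReal.ofReal_mul (Complex.normSq_nonneg _)]
    calc ∫⁻ p in unitDisk ×ˢ unitDisk, ENNReal.ofReal (‖Dfun f g₁ g₂ p‖ ^ 2) ∂(μB.prod μB)
        = ∫⁻ z in unitDisk, ∫⁻ w in unitDisk,
            ENNReal.ofReal (‖Dfun f g₁ g₂ (z, w)‖ ^ 2) ∂μB ∂μB := by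
          rw [← Measure.prod_restrict]
          exact lintegral_prod _ haem
      _ = ∫⁻ z in unitDisk, ENNReal.ofReal (Complex.normSq (deriv g₁ z)) *
            ∫⁻ w in unitDisk, ENNReal.ofReal (Complex.normSq (deriv g₂ w)) *
              H (g₁ z) (g₂ w) ∂μB ∂μB := by
          apply lintegral_congr
          intro z
          rw [← lintegral_const_mul' _ _ ENNReal.ofReal_ne_top]
          exact lintegral_congr fun w => hsplit z w
      _ ≤ ∫⁻ z in unitDisk, ENNReal.ofReal (Complex.normSq (deriv g₁ z)) *
            ∫⁻ b in unitDisk, H (g₁ z) b ∂μB ∂μB := by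
          apply lintegral_mono
          intro z
          exact mul_le_mul_right (cov g₂ hg₂m hg₂d hg₂i (fun b => H (g₁ z) b)) _
      _ ≤ ∫⁻ a in unitDisk, ∫⁻ b in unitDisk, H a b ∂μB ∂μB :=
          cov g₁ hg₁m hg₁d hg₁i (fun a => ∫⁻ b in unitDisk, H a b ∂μB)
      _ = ∫⁻ p in unitDisk ×ˢ unitDisk, H p.1 p.2 ∂(μB.prod μB) := by
          rw [← Measure.prod_restrict]
          exact (lintegral_prod _ haemH).symm
      _ < ⊤ := by
          have := hFsq.2
          rw [hasFiniteIntegral_iff_ofReal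
            (Filter.Eventually.of_forall fun p => sq_nonneg _)] at this
          exact this
  -- norm inequality
  have keybound : ∀ x y : ℂ, ‖x + y‖ ^ 2 ≤ 2 * ‖x‖ ^ 2 + 2 * ‖y‖ ^ 2 := by
    intro x y
    have h := norm_add_le x y
    have h2 := norm_nonneg x
    have h3 := norm_nonneg y
    have h4 := norm_nonneg (x + y)
    nlinarith [sq_nonneg (‖x‖ - ‖y‖)]
  have hsum : IntegrableOn (fun p : ℂ × ℂ => ‖Dfun f g₁ g₂ p + Gkernel g₁ g₂ p.1 p.2‖ ^ 2)
      (unitDisk ×ˢ unitDisk) (μB.prod μB) := by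
    have hb : IntegrableOn (fun p : ℂ × ℂ =>
        2 * ‖Dfun f g₁ g₂ p‖ ^ 2 + 2 * ‖Gkernel g₁ g₂ p.1 p.2‖ ^ 2)
        (unitDisk ×ˢ unitDisk) (μB.prod μB) :=
      (hDint.const_mul 2).add (hGsq.const_mul 2)
    refine hb.mono' (((hDcont.add hKcont).norm.pow 2).aestronglyMeasurable hSm) ?_
    filter_upwards with p
    rw [Real.norm_of_nonneg (sq_nonneg _)]
    exact keybound _ _
  apply hsum.congr
  filter_upwards [self_mem_ae_restrict hSm] with p hp
  rw [hid p hp]
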